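/- arXiv:2406.00435 — 2 statements merged into one kernel-verified Lean document; each statement's English description precedes it below -/
import Mathlib

section
/- The composition of a PSAHARA utility with an increasing continuous piecewise linear function is again a PSAHARA utility: if U is continuous, increasing, and equal to a positive affine transformation of a SAHARA utility on each interval of some finite partition of ℝ, and h : ℝ → ℝ is increasing, continuous, and piecewise affine with finitely many pieces, then U ∘ h has the same structure with respect to some finite partition of ℝ. -/
open Real Filter

/-- The SAHARA utility with parameters `α, β, d`. -/
noncomputable def saharaU (α β d x : ℝ) : ℝ :=
  -(1 / (α ^ 2 - 1)) * ((x - d) + Real.sqrt (β ^ 2 + (x - d) ^ 2)) ^ (-α)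
    * ((x - d) + α * Real.sqrt (β ^ 2 + (x - d) ^ 2))

/-- `U` is a PSAHARA utility: increasing, continuous, and on each open interval of a finite
partition `⊥ = A 0 < A 1 < ⋯ < A (n+1) = ⊤` of the real line, `U` is a positive affine
transformation of a SAHARA utility. -/
def IsPSAHARA (U : ℝ → ℝ) : Prop :=
  StrictMono U ∧ Continuous U ∧
  ∃ (n : ℕ) (A : Fin (n + 2) → EReal) (αp βp dp γp up : Fin (n + 1) → ℝ),
    StrictMono A ∧ A 0 = ⊥ ∧ A (Fin.last (n + 1)) = ⊤ ∧
    (∀ k, 0 < αp k ∧ αp k ≠ 1 ∧ 0 < βp k ∧ 0 < γp k) ∧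
    ∀ (k : Fin (n + 1)) (x : ℝ), A k.castSucc < (x : EReal) → (x : EReal) < A k.succ →
      U x = γp k * saharaU (αp k) (βp k) (dp k) x + up k

/-- `h` is piecewise affine with finitely many pieces. -/
def IsPiecewiseAffine (h : ℝ → ℝ) : Prop :=
  ∃ (n : ℕ) (A : Fin (n + 2) → EReal) (c b : Fin (n + 1) → ℝ),
    StrictMono A ∧ A 0 = ⊥ ∧ A (Fin.last (n + 1)) = ⊤ ∧
    ∀ (k : Fin (n + 1)) (x : ℝ), A k.castSucc < (x : EReal) → (x : EReal) < A k.succ →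
      h x = c k * x + b k

lemma sahara_affine (α β d c b x : ℝ) (hc : 0 < c) :
    saharaU α β d (c * x + b) =
      (c * c ^ (-α)) * saharaU α (β / c) ((d - b) / c) x := by
  unfold saharaU
  have hc' : c ≠ 0 := hc.ne'
  set x' : ℝ := x - (d - b) / c with hx'
  have h1 : c * x + b - d = c * x' := by
    have hcd : c * ((d - b) / c) = d - b := by field_simp
    rw [hx', mul_sub, hcd]; ring
  have h2 : β ^ 2 + (c * x + b - d) ^ 2 = c ^ 2 * ((β / c) ^ 2 + x' ^ 2) := by
    rw [h1]; field_simp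
  set s : ℝ := Real.sqrt ((β / c) ^ 2 + x' ^ 2) with hs
  have h3 : Real.sqrt (β ^ 2 + (c * x + b - d) ^ 2) = c * s := by
    rw [h2, Real.sqrt_mul (by positivity), Real.sqrt_sq hc.le]
  have hsx : 0 ≤ x' + s := by
    have : |x'| ≤ s := by
      rw [hs, ← Real.sqrt_sq_eq_abs]
      exact Real.sqrt_le_sqrt (by nlinarith [sq_nonneg (β / c)])
    cases abs_le.mp this with | intro h _ => linarith
  have h4 : c * x + b - d + Real.sqrt (β ^ 2 + (c * x + b - d) ^ 2) = c * (x' + s) := by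
    rw [h3, h1]; ring
  have h5 : (c * (x' + s)) ^ (-α) = c ^ (-α) * (x' + s) ^ (-α) :=
    Real.mul_rpow hc.le hsx
  rw [h4, h5, h3, h1]
  ring

lemma exists_piece {m : ℕ} (B : Fin (m + 2) → EReal)
    (h0 : B 0 = ⊥) (hl : B (Fin.last (m + 1)) = ⊤) (x : ℝ)
    (hx : ∀ i, B i ≠ (x : EReal)) :
    ∃ j : Fin (m + 1), B j.castSucc < (x : EReal) ∧ (x : EReal) < B j.succ := by
  classical
  have hne : (Finset.univ.filter fun i : Fin (m + 2) => B i < (x : EReal)).Nonempty := by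
    refine ⟨0, ?_⟩
    simp [h0]
  set i0 := (Finset.univ.filter fun i : Fin (m + 2) => B i < (x : EReal)).max' hne with hi0
  have hi0mem : B i0 < (x : EReal) := by
    have := (Finset.univ.filter fun i : Fin (m + 2) => B i < (x : EReal)).max'_mem hne
    simpa using this
  have hi0ne : i0 ≠ Fin.last (m + 1) := by
    intro hh
    rw [hh, hl] at hi0mem
    exact (not_top_lt hi0mem)
  have hlt : (i0 : ℕ) < m + 1 := by
    have := Fin.lt_last_iff_ne_last.mpr hi0ne
    omega
  refine ⟨⟨i0, hlt⟩, ?_, ?_⟩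
  · have : Fin.castSucc ⟨(i0 : ℕ), hlt⟩ = i0 := by ext; simp
    rw [this]; exact hi0mem
  · have hsuccnot : ¬ (B (Fin.succ ⟨(i0 : ℕ), hlt⟩) < (x : EReal)) := by
      intro hcon
      have hmem : Fin.succ ⟨(i0 : ℕ), hlt⟩ ∈
          (Finset.univ.filter fun i : Fin (m + 2) => B i < (x : EReal)) := by
        simpa using hcon
      have hle := Finset.le_max' _ _ hmem
      rw [← hi0, Fin.le_def] at hle
      simp [Fin.val_succ] at hle
    rcases lt_or_eq_of_le (not_lt.mp hsuccnot) with hh | hh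
    · exact hh
    · exact absurd hh.symm (hx _)

/-- The composition of a PSAHARA utility with an increasing continuous piecewise linear
function is again a PSAHARA utility. -/
theorem psahara_comp (U h : ℝ → ℝ) (hU : IsPSAHARA U)
    (hmono : StrictMono h) (hcont : Continuous h) (hpl : IsPiecewiseAffine h) :
    IsPSAHARA (U ∘ h) := by
  classical
  obtain ⟨hUm, hUc, n, A, αp, βp, dp, γp, up, hA, hA0, hAl, hpar, hpiece⟩ := hU
  obtain ⟨m, B, c, b, hB, hB0, hBl, hBpiece⟩ := hpl
  -- slopes are positive
  have hc : ∀ j : Fin (m + 1), 0 < c j := by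
    intro j
    have hlt : B j.castSucc < B j.succ := hB (Fin.castSucc_lt_succ : j.castSucc < j.succ)
    obtain ⟨x, hx1, hx2⟩ := EReal.exists_between_coe_real hlt
    obtain ⟨y, hy1, hy2⟩ := EReal.exists_between_coe_real hx2
    have hxy : x < y := by exact_mod_cast hy1
    have hhx := hBpiece j x hx1 hx2
    have hhy := hBpiece j y (lt_trans hx1 hy1) hy2
    have := hmono hxy
    rw [hhx, hhy] at this
    nlinarith
  -- h is surjective
  have htop : Tendsto h atTop atTop := by
    set j := Fin.last m with hj
    have hlt : B j.castSucc < B j.succ := hB (Fin.castSucc_lt_succ : j.castSucc < j.succ)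
    obtain ⟨x0, hx0, _⟩ := EReal.exists_between_coe_real hlt
    have hsucc : B j.succ = ⊤ := by rw [hj, Fin.succ_last, hBl]
    have heq : h =ᶠ[atTop] fun x => c j * x + b j := by
      filter_upwards [eventually_gt_atTop x0] with x hx
      exact hBpiece j x (lt_trans hx0 (by exact_mod_cast hx))
        (by rw [hsucc]; exact EReal.coe_lt_top x)
    refine Tendsto.congr' heq.symm ?_
    exact tendsto_atTop_add_const_right _ _ ((tendsto_id).const_mul_atTop (hc j))
  have hbot : Tendsto h atBot atBot := by
    set j : Fin (m + 1) := 0 with hj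
    have hlt : B j.castSucc < B j.succ := hB (Fin.castSucc_lt_succ : j.castSucc < j.succ)
    obtain ⟨x0, _, hx0⟩ := EReal.exists_between_coe_real hlt
    have hcs : B j.castSucc = ⊥ := by
      rw [hj]
      have : (Fin.castSucc (0 : Fin (m + 1))) = (0 : Fin (m + 2)) := rfl
      rw [this, hB0]
    have heq : h =ᶠ[atBot] fun x => c j * x + b j := by
      filter_upwards [eventually_lt_atBot x0] with x hx
      exact hBpiece j x (by rw [hcs]; exact bot_lt_iff_ne_bot.mpr (by simp))
        (lt_trans (by exact_mod_cast hx) hx0)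
    refine Tendsto.congr' heq.symm ?_
    exact tendsto_atBot_add_const_right _ _ ((tendsto_id).const_mul_atBot (hc j))
  have hsurj : Function.Surjective h := hcont.surjective htop hbot
  set e := StrictMono.orderIsoOfSurjective h hmono hsurj with he
  have he_app : ∀ x : ℝ, e x = h x := fun _ => rfl
  -- extension of e.symm to EReal
  set emb : EReal → EReal := fun t =>
    if t = ⊥ then ⊥ else if t = ⊤ then ⊤ else ((e.symm t.toReal : ℝ) : EReal) with hemb
  have emb_bot : emb ⊥ = ⊥ := by simp [hemb]
  have emb_top : emb ⊤ = ⊤ := by simp [hemb]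
  have emb_coe : ∀ r : ℝ, emb (r : EReal) = ((e.symm r : ℝ) : EReal) := by
    intro r; simp [hemb]
  have emb_mono : StrictMono emb := by
    intro s t hst
    induction t with
    | bot => exact absurd hst (by simp)
    | top =>
      rw [emb_top]
      induction s with
      | bot => rw [emb_bot]; exact bot_lt_top
      | top => exact absurd hst (by simp)
      | coe r => rw [emb_coe]; exact EReal.coe_lt_top _
    | coe r =>
      rw [emb_coe]
      induction s with
      | bot => rw [emb_bot]; exact bot_lt_iff_ne_bot.mpr (by simp)
      | top => exact absurd hst (by simp)
      | coe q =>
        rw [emb_coe]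
        have : q < r := by exact_mod_cast hst
        exact_mod_cast e.symm.strictMono this
  -- the refined partition
  set T : Finset EReal :=
    (Finset.univ.image fun i => emb (A i)) ∪ Finset.univ.image B with hT
  have hbotT : (⊥ : EReal) ∈ T := by
    rw [hT]
    refine Finset.mem_union_left _ (Finset.mem_image.mpr ⟨0, Finset.mem_univ _, ?_⟩)
    rw [hA0, emb_bot]
  have htopT : (⊤ : EReal) ∈ T := by
    rw [hT]
    refine Finset.mem_union_left _
      (Finset.mem_image.mpr ⟨Fin.last (n + 1), Finset.mem_univ _, ?_⟩)
    rw [hAl, emb_top]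
  have hembT : ∀ i, emb (A i) ∈ T := by
    intro i
    rw [hT]
    exact Finset.mem_union_left _ (Finset.mem_image.mpr ⟨i, Finset.mem_univ _, rfl⟩)
  have hBT : ∀ i, B i ∈ T := by
    intro i
    rw [hT]
    exact Finset.mem_union_right _ (Finset.mem_image.mpr ⟨i, Finset.mem_univ _, rfl⟩)
  have hcard2 : 2 ≤ T.card :=
    Finset.one_lt_card.mpr ⟨⊥, hbotT, ⊤, htopT, by simp⟩
  obtain ⟨n', hn'⟩ : ∃ n', T.card = n' + 2 := ⟨T.card - 2, by omega⟩
  set A' : Fin (n' + 2) → EReal := fun i => ((T.orderIsoOfFin hn' i : EReal)) with hA'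
  have hA'mono : StrictMono A' := by
    intro i j hij
    have := (T.orderIsoOfFin hn').strictMono hij
    exact_mod_cast this
  have hA'surj : ∀ t ∈ T, ∃ i, A' i = t := by
    intro t ht
    refine ⟨(T.orderIsoOfFin hn').symm ⟨t, ht⟩, ?_⟩
    show ((T.orderIsoOfFin hn') ((T.orderIsoOfFin hn').symm ⟨t, ht⟩) : EReal) = t
    rw [OrderIso.apply_symm_apply]
  have hA'0 : A' 0 = ⊥ := by
    obtain ⟨i, hi⟩ := hA'surj ⊥ hbotT
    refine le_antisymm ?_ bot_le
    rw [← hi]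
    exact hA'mono.monotone (Fin.zero_le i)
  have hA'last : A' (Fin.last (n' + 1)) = ⊤ := by
    obtain ⟨i, hi⟩ := hA'surj ⊤ htopT
    refine le_antisymm le_top ?_
    rw [← hi]
    exact hA'mono.monotone (Fin.le_last i)
  have hnoT : ∀ (k : Fin (n' + 1)) (t : EReal), t ∈ T →
      ¬(A' k.castSucc < t ∧ t < A' k.succ) := by
    rintro k t ht ⟨h1, h2⟩
    obtain ⟨i, rfl⟩ := hA'surj t ht
    have hk1 : k.castSucc < i := hA'mono.lt_iff_lt.mp h1
    have hk2 : i < k.succ := hA'mono.lt_iff_lt.mp h2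
    rw [Fin.lt_def] at hk1 hk2
    simp [Fin.val_succ] at hk1 hk2
    omega
  have key : ∀ k : Fin (n' + 1), ∃ α β d γ u : ℝ,
      (0 < α ∧ α ≠ 1 ∧ 0 < β ∧ 0 < γ) ∧
      ∀ x : ℝ, A' k.castSucc < (x : EReal) → (x : EReal) < A' k.succ →
        U (h x) = γ * saharaU α β d x + u := by
    intro k
    have hkk : A' k.castSucc < A' k.succ := hA'mono (Fin.castSucc_lt_succ : k.castSucc < k.succ)
    obtain ⟨x0, hx01, hx02⟩ := EReal.exists_between_coe_real hkk
    have hx0T : ((x0 : EReal)) ∉ T := fun hmem => hnoT k _ hmem ⟨hx01, hx02⟩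
    obtain ⟨j, hj1, hj2⟩ := exists_piece B hB0 hBl x0
      (fun i heq => hx0T (heq ▸ hBT i))
    have hAx : ∀ i, A i ≠ ((h x0 : ℝ) : EReal) := by
      intro i heq
      apply hx0T
      have hemb2 : emb (A i) = ((x0 : ℝ) : EReal) := by
        rw [heq, emb_coe]
        congr 1
        rw [← he_app x0]
        exact e.symm_apply_apply x0
      exact hemb2 ▸ hembT i
    obtain ⟨i, hi1, hi2⟩ := exists_piece A hA0 hAl (h x0) hAx
    have hembhx0 : emb ((h x0 : ℝ) : EReal) = ((x0 : ℝ) : EReal) := by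
      rw [emb_coe]
      congr 1
      rw [← he_app x0]
      exact e.symm_apply_apply x0
    have hBcs : B j.castSucc ≤ A' k.castSucc := by
      by_contra hcon
      push_neg at hcon
      exact hnoT k _ (hBT j.castSucc) ⟨hcon, lt_trans hj1 hx02⟩
    have hBsucc : A' k.succ ≤ B j.succ := by
      by_contra hcon
      push_neg at hcon
      exact hnoT k _ (hBT j.succ) ⟨lt_trans hx01 hj2, hcon⟩
    have hics : emb (A i.castSucc) < (x0 : EReal) := by
      rw [← hembhx0]
      exact emb_mono hi1
    have hisucc : (x0 : EReal) < emb (A i.succ) := by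
      rw [← hembhx0]
      exact emb_mono hi2
    have hAcs : emb (A i.castSucc) ≤ A' k.castSucc := by
      by_contra hcon
      push_neg at hcon
      exact hnoT k _ (hembT i.castSucc) ⟨hcon, lt_trans hics hx02⟩
    have hAsucc : A' k.succ ≤ emb (A i.succ) := by
      by_contra hcon
      push_neg at hcon
      exact hnoT k _ (hembT i.succ) ⟨lt_trans hx01 hisucc, hcon⟩
    obtain ⟨hα, hα1, hβ, hγ⟩ := hpar i
    refine ⟨αp i, βp i / c j, (dp i - b j) / c j,
      γp i * (c j * (c j) ^ (-(αp i))), up i,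
      ⟨hα, hα1, div_pos hβ (hc j),
        mul_pos hγ (mul_pos (hc j) (Real.rpow_pos_of_pos (hc j) _))⟩, ?_⟩
    intro x hxl hxr
    have hbx : B j.castSucc < (x : EReal) := lt_of_le_of_lt hBcs hxl
    have hbx2 : (x : EReal) < B j.succ := lt_of_lt_of_le hxr hBsucc
    have hhx : h x = c j * x + b j := hBpiece j x hbx hbx2
    have hembhx : emb ((h x : ℝ) : EReal) = ((x : ℝ) : EReal) := by
      rw [emb_coe]
      congr 1
      rw [← he_app x]
      exact e.symm_apply_apply x
    have hax : A i.castSucc < ((h x : ℝ) : EReal) := by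
      rw [← emb_mono.lt_iff_lt, hembhx]
      exact lt_of_le_of_lt hAcs hxl
    have hax2 : ((h x : ℝ) : EReal) < A i.succ := by
      rw [← emb_mono.lt_iff_lt, hembhx]
      exact lt_of_lt_of_le hxr hAsucc
    rw [hpiece i (h x) hax hax2, hhx, sahara_affine _ _ _ _ _ _ (hc j)]
    ring
  choose αp' βp' dp' γp' up' hcond hval using key
  exact ⟨hUm.comp hmono, hUc.comp hcont, n', A', αp', βp', dp', γp', up',
    hA'mono, hA'0, hA'last, hcond, fun k x h1 h2 => hval k x h1 h2⟩
end

section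
/- Let U : ℝ → ℝ be continuous and let U** be its concave envelope (the smallest continuous concave function dominating U). Then the set A = {x ∈ ℝ : U(x) ≠ U**(x)} is open, and U** is affine on each connected component of A. -/
open Real Set

/-- `E` is the concave envelope of `U` on ℝ: the smallest continuous concave function
dominating `U`. -/
def IsConcaveEnvelope (U E : ℝ → ℝ) : Prop :=
  Continuous E ∧ ConcaveOn ℝ Set.univ E ∧ (∀ x, U x ≤ E x) ∧
  ∀ h : ℝ → ℝ, Continuous h → ConcaveOn ℝ Set.univ h → (∀ x, U x ≤ h x) →
    ∀ x, E x ≤ h x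

lemma affine_concaveOn (a b : ℝ) : ConcaveOn ℝ Set.univ (fun y => a * y + b) := by
  refine ⟨convex_univ, fun x _ y _ s t hs ht hst => ?_⟩
  simp only [smul_eq_mul]
  apply le_of_eq
  linear_combination b * hst

/-- Concave function lies above the chord inside the interval. -/
lemma chord_inside {E : ℝ → ℝ} (hE : ConcaveOn ℝ Set.univ E) {p r y : ℝ}
    (hpr : p < r) (h1 : p ≤ y) (h2 : y ≤ r) :
    E p + (E r - E p) / (r - p) * (y - p) ≤ E y := by
  have hrp : (0:ℝ) < r - p := by linarith
  set t := (r - y) / (r - p) with ht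
  have ht0 : 0 ≤ t := div_nonneg (by linarith) (by linarith)
  have ht1 : 0 ≤ 1 - t := by
    rw [ht, sub_nonneg, div_le_one hrp]; linarith
  have key := hE.2 (mem_univ p) (mem_univ r) ht0 ht1 (by ring)
  simp only [smul_eq_mul] at key
  have hpt : t * p + (1 - t) * r = y := by rw [ht]; field_simp; ring
  rw [hpt] at key
  refine le_trans (le_of_eq ?_) key
  rw [ht]; field_simp
  ring

/-- Concave function lies below the chord line outside the interval. -/
lemma chord_outside {E : ℝ → ℝ} (hE : ConcaveOn ℝ Set.univ E) {p r y : ℝ}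
    (hpr : p < r) (hy : y ≤ p ∨ r ≤ y) :
    E y ≤ E p + (E r - E p) / (r - p) * (y - p) := by
  have hrp : (0:ℝ) < r - p := by linarith
  rw [div_mul_eq_mul_div, ← sub_le_iff_le_add', le_div_iff₀ hrp]
  rcases hy with hy | hy
  · rcases eq_or_lt_of_le hy with rfl | hy
    · simp
    have hry : (0:ℝ) < r - y := by linarith
    set t := (r - p) / (r - y) with ht
    have ht0 : 0 ≤ t := div_nonneg (by linarith) (by linarith)
    have ht1 : 0 ≤ 1 - t := by
      rw [ht, sub_nonneg, div_le_one hry]; linarith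
    have key := hE.2 (mem_univ y) (mem_univ r) ht0 ht1 (by ring)
    simp only [smul_eq_mul] at key
    have hpt : t * y + (1 - t) * r = p := by rw [ht]; field_simp; ring
    rw [hpt] at key
    have key2 : (r - p) * E y + ((r - y) - (r - p)) * E r ≤ (r - y) * E p := by
      have h := mul_le_mul_of_nonneg_right key hry.le
      rw [ht] at h; field_simp at h
      nlinarith [h]
    nlinarith [key2]
  · rcases eq_or_lt_of_le hy with rfl | hy
    · nlinarith
    have hyp : (0:ℝ) < y - p := by linarith
    set t := (y - r) / (y - p) with ht
    have ht0 : 0 ≤ t := div_nonneg (by linarith) (by linarith)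
    have ht1 : 0 ≤ 1 - t := by
      rw [ht, sub_nonneg, div_le_one hyp]; linarith
    have key := hE.2 (mem_univ p) (mem_univ y) ht0 ht1 (by ring)
    simp only [smul_eq_mul] at key
    have hpt : t * p + (1 - t) * y = r := by rw [ht]; field_simp; ring
    rw [hpt] at key
    have key2 : (y - r) * E p + ((y - p) - (y - r)) * E y ≤ (y - p) * E r := by
      have h := mul_le_mul_of_nonneg_right key hyp.le
      rw [ht] at h; field_simp at h
      nlinarith [h]
    nlinarith [key2]

/-- If a concave function touches a chord at an interior point, it equals the chord
on the whole interval. -/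
lemma chord_eq {E : ℝ → ℝ} (hE : ConcaveOn ℝ Set.univ E) {p q r y : ℝ}
    (hpq : p < q) (hqr : q < r)
    (hq : E q = E p + (E r - E p) / (r - p) * (q - p))
    (h1 : p ≤ y) (h2 : y ≤ r) :
    E y = E p + (E r - E p) / (r - p) * (y - p) := by
  have hpr : p < r := hpq.trans hqr
  have hrp : (0:ℝ) < r - p := by linarith
  refine le_antisymm ?_ (chord_inside hE hpr h1 h2)
  rw [div_mul_eq_mul_div, ← sub_le_iff_le_add', le_div_iff₀ hrp]
  -- goal : (E y - E p) * (r - p) ≤ (E r - E p) * (y - p)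
  have hq2 : (r - p) * E q = (r - p) * E p + (E r - E p) * (q - p) := by
    rw [hq]; field_simp
  rcases le_or_gt y q with hyq | hyq
  · -- q is a convex combination of y and r
    have hry : (0:ℝ) < r - y := by linarith
    set t := (r - q) / (r - y) with ht
    have ht0 : 0 ≤ t := div_nonneg (by linarith) (by linarith)
    have ht1 : 0 ≤ 1 - t := by
      rw [ht, sub_nonneg, div_le_one hry]; linarith
    have key := hE.2 (mem_univ y) (mem_univ r) ht0 ht1 (by ring)
    simp only [smul_eq_mul] at key
    have hpt : t * y + (1 - t) * r = q := by rw [ht]; field_simp; ring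
    rw [hpt] at key
    have Knn : 0 ≤ (r - y) * E q - (q - y) * E r - (r - q) * E y := by
      have h := mul_le_mul_of_nonneg_right key hry.le
      rw [ht] at h; field_simp at h
      nlinarith [h]
    have hH : (r - y) * ((r - p) * E q - (r - p) * E p - (E r - E p) * (q - p)) = 0 := by
      rw [hq2]; ring
    have hW : 0 ≤ ((E r - E p) * (y - p) - (E y - E p) * (r - p)) * (r - q) := by
      nlinarith [mul_nonneg hrp.le Knn, hH]
    nlinarith [hW]
  · -- q is a convex combination of p and y
    have hyp : (0:ℝ) < y - p := by linarith
    set t := (y - q) / (y - p) with ht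
    have ht0 : 0 ≤ t := div_nonneg (by linarith) (by linarith)
    have ht1 : 0 ≤ 1 - t := by
      rw [ht, sub_nonneg, div_le_one hyp]; linarith
    have key := hE.2 (mem_univ p) (mem_univ y) ht0 ht1 (by ring)
    simp only [smul_eq_mul] at key
    have hpt : t * p + (1 - t) * y = q := by rw [ht]; field_simp; ring
    rw [hpt] at key
    have Knn : 0 ≤ (y - p) * E q - (y - q) * E p - (q - p) * E y := by
      have h := mul_le_mul_of_nonneg_right key hyp.le
      rw [ht] at h; field_simp at h
      nlinarith [h]
    have hH : (y - p) * ((r - p) * E q - (r - p) * E p - (E r - E p) * (q - p)) = 0 := by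
      rw [hq2]; ring
    have hW : 0 ≤ ((E r - E p) * (y - p) - (E y - E p) * (r - p)) * (q - p) := by
      nlinarith [mul_nonneg hrp.le Knn, hH]
    nlinarith [hW]
/-- Local affineness of the envelope at points where `U < E`. -/
lemma local_affine {U E : ℝ → ℝ} (hU : Continuous U) (hE : IsConcaveEnvelope U E)
    {q : ℝ} (hq : U q ≠ E q) :
    ∃ a b ε : ℝ, 0 < ε ∧ ∀ y ∈ Metric.ball q ε, E y = a * y + b := by
  obtain ⟨hEc, hEconc, hUE, hmin⟩ := hE
  have hUq : U q < E q := (hUE q).lt_of_ne hq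
  obtain ⟨m, hm⟩ : ∃ m, m = (U q + E q) / 2 := ⟨_, rfl⟩
  have hqO : q ∈ {y | U y < m ∧ m < E y} := ⟨by rw [hm]; linarith, by rw [hm]; linarith⟩
  have hO : IsOpen {y | U y < m ∧ m < E y} :=
    (isOpen_lt hU continuous_const).inter (isOpen_lt continuous_const hEc)
  obtain ⟨ε, hε, hball⟩ := Metric.isOpen_iff.1 hO q hqO
  obtain ⟨p, hp⟩ : ∃ p, p = q - ε / 2 := ⟨_, rfl⟩
  obtain ⟨r, hr⟩ : ∃ r, r = q + ε / 2 := ⟨_, rfl⟩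
  have hpq : p < q := by rw [hp]; linarith
  have hqr : q < r := by rw [hr]; linarith
  have hpr : p < r := hpq.trans hqr
  have hrp : (0:ℝ) < r - p := by linarith
  have hpball : p ∈ Metric.ball q ε := by
    rw [Metric.mem_ball, Real.dist_eq, hp, abs_lt]; constructor <;> linarith
  have hrball : r ∈ Metric.ball q ε := by
    rw [Metric.mem_ball, Real.dist_eq, hr, abs_lt]; constructor <;> linarith
  obtain ⟨a, ha⟩ : ∃ a, a = (E r - E p) / (r - p) := ⟨_, rfl⟩
  obtain ⟨b, hb⟩ : ∃ b, b = E p - a * p := ⟨_, rfl⟩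
  have hLy : ∀ y : ℝ, a * y + b = E p + (E r - E p) / (r - p) * (y - p) := by
    intro y; rw [hb, ha]; ring
  -- the competitor function dominates U
  have hcomp : ∀ y, U y ≤ min (E y) (a * y + b) := by
    intro y
    by_cases hy : p ≤ y ∧ y ≤ r
    · refine le_min (hUE y) ?_
      have hyball : y ∈ Metric.ball q ε := by
        rw [Metric.mem_ball, Real.dist_eq, abs_lt]
        constructor
        · have := hy.1; rw [hp] at this; linarith
        · have := hy.2; rw [hr] at this; linarith
      have hUy : U y < m := (hball hyball).1
      have hEp : m < E p := (hball hpball).2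
      have hEr : m < E r := (hball hrball).2
      have hmL : m ≤ a * y + b := by
        rw [hLy y, show E p + (E r - E p) / (r - p) * (y - p)
            = ((r - y) * E p + (y - p) * E r) / (r - p) from by field_simp; ring,
          le_div_iff₀ hrp]
        nlinarith [mul_nonneg (by linarith [hy.2] : (0:ℝ) ≤ r - y) (by linarith : (0:ℝ) ≤ E p - m),
          mul_nonneg (by linarith [hy.1] : (0:ℝ) ≤ y - p) (by linarith : (0:ℝ) ≤ E r - m)]
      linarith
    · have hy' : y ≤ p ∨ r ≤ y := by
        rcases le_or_gt y p with h | h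
        · exact Or.inl h
        · right; by_contra hh; push_neg at hh; exact hy ⟨h.le, hh.le⟩
      refine le_min (hUE y) ((hUE y).trans ?_)
      rw [hLy y]
      exact chord_outside hEconc hpr hy'
  have hmincont : Continuous fun y => min (E y) (a * y + b) :=
    hEc.min (by continuity)
  have hminconc : ConcaveOn ℝ Set.univ fun y => min (E y) (a * y + b) := by
    have h2 := hEconc.inf (affine_concaveOn a b)
    exact h2
  have hEqLq : E q = a * q + b := by
    refine le_antisymm ((hmin _ hmincont hminconc hcomp q).trans (min_le_right _ _)) ?_
    rw [hLy q]
    exact chord_inside hEconc hpr hpq.le hqr.le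
  refine ⟨a, b, ε / 2, by positivity, fun y hy => ?_⟩
  rw [Metric.mem_ball, Real.dist_eq, abs_lt] at hy
  have h1 : p ≤ y := by rw [hp]; linarith [hy.1]
  have h2 : y ≤ r := by rw [hr]; linarith [hy.2]
  rw [hLy y]
  exact chord_eq hEconc hpq hqr (by rw [← hLy q]; exact hEqLq) h1 h2

/-- The set where a continuous function differs from its concave envelope is open, and the
concave envelope is affine on each connected component of this set. -/
theorem concaveEnvelope_affine_on_components (U E : ℝ → ℝ)
    (hU : Continuous U) (hE : IsConcaveEnvelope U E) :
    IsOpen {x : ℝ | U x ≠ E x} ∧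
    ∀ x ∈ {x : ℝ | U x ≠ E x}, ∃ a b : ℝ,
      ∀ y ∈ connectedComponentIn {x : ℝ | U x ≠ E x} x, E y = a * y + b := by
  have hAopen : IsOpen {x : ℝ | U x ≠ E x} := by
    have h : {x : ℝ | U x ≠ E x} = {x : ℝ | U x = E x}ᶜ := rfl
    rw [h]
    exact (isClosed_eq hU hE.1).isOpen_compl
  refine ⟨hAopen, fun x hx => ?_⟩
  obtain ⟨a, b, ε, hε, hball⟩ := local_affine hU hE hx
  have hSopen : IsOpen {y : ℝ | ∀ᶠ z in nhds y, E z = a * z + b} :=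
    isOpen_setOf_eventually_nhds
  have hxS : x ∈ {y : ℝ | ∀ᶠ z in nhds y, E z = a * z + b} := by
    rw [Set.mem_setOf_eq]
    filter_upwards [Metric.ball_mem_nhds x hε] using hball
  have haffine_eq : ∀ a' b' z δ : ℝ, 0 < δ →
      (∀ w ∈ Metric.ball z δ, a * w + b = a' * w + b') → a = a' ∧ b = b' := by
    intro a' b' z δ hδ hagree
    have h1 := hagree z (Metric.mem_ball_self hδ)
    have h2 := hagree (z + δ / 2) (by
      rw [Metric.mem_ball, Real.dist_eq, abs_lt]; constructor <;> linarith)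
    have h3 : (a - a') * (δ / 2) = 0 := by linarith
    have ha : a = a' := by
      rcases mul_eq_zero.1 h3 with h | h
      · linarith
      · exfalso; linarith
    exact ⟨ha, by rw [ha] at h1; linarith⟩
  have hclosure : closure {y : ℝ | ∀ᶠ z in nhds y, E z = a * z + b} ∩
      connectedComponentIn {x : ℝ | U x ≠ E x} x ⊆
      {y : ℝ | ∀ᶠ z in nhds y, E z = a * z + b} := by
    rintro y ⟨hyc, hyC⟩
    have hyA : U y ≠ E y := connectedComponentIn_subset _ _ hyC
    obtain ⟨a', b', ε', hε', hball'⟩ := local_affine hU hE hyA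
    obtain ⟨z, hzS, hzy⟩ := Metric.mem_closure_iff.1 hyc ε' hε'
    rw [Set.mem_setOf_eq] at hzS
    have hzball : Metric.ball y ε' ∈ nhds z := by
      refine Metric.isOpen_ball.mem_nhds ?_
      rw [Metric.mem_ball, dist_comm]; exact hzy
    have hboth : ∀ᶠ w in nhds z, a * w + b = a' * w + b' := by
      filter_upwards [hzS, hzball] with w hw1 hw2
      rw [← hw1, hball' w hw2]
    obtain ⟨δ, hδ, hδball⟩ := Metric.eventually_nhds_iff_ball.1 hboth
    obtain ⟨hab1, hab2⟩ := haffine_eq a' b' z δ hδ hδball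
    rw [Set.mem_setOf_eq]
    filter_upwards [Metric.ball_mem_nhds y hε'] with w hw
    rw [hball' w hw, hab1, hab2]
  have hCS : connectedComponentIn {x : ℝ | U x ≠ E x} x ⊆
      {y : ℝ | ∀ᶠ z in nhds y, E z = a * z + b} :=
    isPreconnected_connectedComponentIn.subset_of_closure_inter_subset hSopen
      ⟨x, mem_connectedComponentIn hx, hxS⟩ hclosure
  exact ⟨a, b, fun y hy => (hCS hy).self_of_nhds⟩
end
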